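/- If A is an m-dimensional permutation array of odd order n with all n_i odd, then A has at least one repeated toroidal vector, and moreover there is a window of size n_1 × ⋯ × n_m in the periodic extension of A containing a repeated difference vector. In particular, multidimensional Costas arrays of odd order are not periodic Costas. -/
import Mathlib


/-- `α` is a dot of the periodic extension of the permutation array defined by `φ`. -/
def IsExtDotPerm (k l : ℕ) (n₁ : Fin k → ℕ) (n₂ : Fin l → ℕ)
    (φ : ((i : Fin k) → Fin (n₁ i)) ≃ ((j : Fin l) → Fin (n₂ j)))
    (α : ((i : Fin k) → ℤ) × ((j : Fin l) → ℤ)) : Prop :=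
  ∃ x : (i : Fin k) → Fin (n₁ i),
    (∀ a, (α.1 a : ZMod (n₁ a)) = ((x a : ℕ) : ZMod (n₁ a))) ∧
    (∀ b, (α.2 b : ZMod (n₂ b)) = ((φ x b : ℕ) : ZMod (n₂ b)))

/-- `α` lies in the `n₁ 1 × ⋯ × n₂ l` window based at `κ`. -/
def InWindowPerm (k l : ℕ) (n₁ : Fin k → ℕ) (n₂ : Fin l → ℕ)
    (κ α : ((i : Fin k) → ℤ) × ((j : Fin l) → ℤ)) : Prop :=
  (∀ a, κ.1 a ≤ α.1 a ∧ α.1 a < κ.1 a + (n₁ a : ℤ)) ∧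
  (∀ b, κ.2 b ≤ α.2 b ∧ α.2 b < κ.2 b + (n₂ b : ℤ))

section AuxOddCostas

lemma fin_eq_of_cast' (m : ℕ) (a b : Fin m) (h : ((a : ℤ) : ZMod m) = ((b : ℤ) : ZMod m)) :
    a = b := by
  haveI : NeZero m := ⟨a.pos.ne'⟩
  have h' : ((a : ℕ) : ZMod m) = ((b : ℕ) : ZMod m) := by push_cast at h ⊢; exact h
  have := congrArg ZMod.val h'
  rw [ZMod.val_cast_of_lt a.isLt, ZMod.val_cast_of_lt b.isLt] at this
  exact Fin.val_injective this

lemma exists_balanced_rep' (n : ℕ) (hn : 2 ≤ n) (hodd : Odd n) (c : ZMod n) :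
    ∃ d : ℤ, 2 * |d| < (n : ℤ) ∧ ((d : ℤ) : ZMod n) = c := by
  haveI : NeZero n := ⟨by omega⟩
  have hv : c.val < n := ZMod.val_lt c
  have hvz : (c.val : ℤ) < n := by exact_mod_cast hv
  have hmod := Nat.odd_iff.mp hodd
  by_cases h : 2 * c.val < n
  · refine ⟨(c.val : ℤ), ?_, by simp [ZMod.natCast_val]⟩
    rw [abs_of_nonneg (by positivity)]; exact_mod_cast h
  · refine ⟨(c.val : ℤ) - n, ?_, by push_cast; simp [ZMod.natCast_val]⟩
    have hne : 2 * c.val ≠ n := by omega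
    have h1 : (n : ℤ) < 2 * c.val := by exact_mod_cast (by omega : n < 2 * c.val)
    rw [abs_of_nonpos (by omega)]; omega

lemma window_aux' (n : ℕ) (hn : 0 < n) (d r₁ r₂ : ℤ) (hd0 : 0 ≤ d) (hd : 2 * d < n) :
    ∃ κ u₁ u₂ : ℤ, u₁ ≡ r₁ [ZMOD n] ∧ u₂ ≡ r₂ [ZMOD n] ∧
      κ ≤ u₁ ∧ u₁ + d < κ + n ∧ κ ≤ u₂ ∧ u₂ + d < κ + n := by
  set g := (r₂ - r₁).emod n with hg
  have hg0 : 0 ≤ g := Int.emod_nonneg _ (by exact_mod_cast hn.ne')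
  have hgn : g < n := Int.emod_lt_of_pos _ (by exact_mod_cast hn)
  have hgc : g ≡ r₂ - r₁ [ZMOD n] := Int.emod_emod_of_dvd _ dvd_rfl
  have hcong : (r₁ + g) ≡ r₂ [ZMOD n] := by
    calc r₁ + g ≡ r₁ + (r₂ - r₁) [ZMOD n] := Int.ModEq.add_left _ hgc
      _ = r₂ := by ring
  have hrn : r₁ + n ≡ r₁ [ZMOD n] := by simp [Int.ModEq]
  by_cases h : g + d < n
  · exact ⟨r₁, r₁, r₁ + g, Int.ModEq.refl _, hcong, le_refl _, by omega, by omega, by omega⟩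
  · exact ⟨r₁ + g, r₁ + n, r₁ + g, hrn, hcong, by omega, by omega, le_refl _, by omega⟩

lemma window_full' (n : ℕ) (hn : 0 < n) (d r₁ r₂ : ℤ) (hd : 2 * |d| < n) :
    ∃ κ u₁ u₂ : ℤ, u₁ ≡ r₁ [ZMOD n] ∧ u₂ ≡ r₂ [ZMOD n] ∧
      (κ ≤ u₁ ∧ u₁ < κ + n) ∧ (κ ≤ u₂ ∧ u₂ < κ + n) ∧
      (κ ≤ u₁ + d ∧ u₁ + d < κ + n) ∧ (κ ≤ u₂ + d ∧ u₂ + d < κ + n) := by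
  rcases le_or_gt 0 d with hd0 | hd0
  · obtain ⟨κ, u₁, u₂, h1, h2, h3, h4, h5, h6⟩ := window_aux' n hn d r₁ r₂ hd0
      (by rwa [abs_of_nonneg hd0] at hd)
    exact ⟨κ, u₁, u₂, h1, h2, ⟨h3, by omega⟩, ⟨h5, by omega⟩, ⟨by omega, h4⟩, ⟨by omega, h6⟩⟩
  · obtain ⟨κ, v₁, v₂, h1, h2, h3, h4, h5, h6⟩ := window_aux' n hn (-d) (r₁ + d) (r₂ + d)
      (by omega) (by rwa [abs_of_neg hd0] at hd)
    refine ⟨κ, v₁ - d, v₂ - d, ?_, ?_, ⟨by omega, by omega⟩, ⟨by omega, by omega⟩,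
      ⟨by omega, by omega⟩, ⟨by omega, by omega⟩⟩
    · have := h1.sub_right d; simpa using this
    · have := h2.sub_right d; simpa using this

lemma shift_cast' {n : ℕ} {u d x y : ℤ}
    (hu : ((u : ZMod n)) = (x : ZMod n)) (hd : ((d : ZMod n)) = (y : ZMod n) - (x : ZMod n)) :
    ((u + d : ℤ) : ZMod n) = (y : ZMod n) := by
  push_cast
  rw [hu, hd]; ring

end AuxOddCostas

private lemma oddCostas_part1 (k l : ℕ) (hk : 0 < k) (hl : 0 < l)
    (n₁ : Fin k → ℕ) (n₂ : Fin l → ℕ)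
    (hn₁ : ∀ i, 2 ≤ n₁ i) (hn₂ : ∀ j, 2 ≤ n₂ j)
    (φ : ((i : Fin k) → Fin (n₁ i)) ≃ ((j : Fin l) → Fin (n₂ j))) :
    (∃ x₁ y₁ x₂ y₂ : (i : Fin k) → Fin (n₁ i),
      x₁ ≠ y₁ ∧ x₂ ≠ y₂ ∧ (x₁, y₁) ≠ (x₂, y₂) ∧
      (∀ i, (((y₁ i : ℤ) - (x₁ i : ℤ)) : ZMod (n₁ i))
          = (((y₂ i : ℤ) - (x₂ i : ℤ)) : ZMod (n₁ i))) ∧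
      (∀ j, (((φ y₁ j : ℤ) - (φ x₁ j : ℤ)) : ZMod (n₂ j))
          = (((φ y₂ j : ℤ) - (φ x₂ j : ℤ)) : ZMod (n₂ j)))) := by
  haveI : ∀ i, NeZero (n₁ i) := fun i => ⟨by have := hn₁ i; omega⟩
  haveI : ∀ j, NeZero (n₂ j) := fun j => ⟨by have := hn₂ j; omega⟩
  set f : (((i : Fin k) → Fin (n₁ i)) × ((i : Fin k) → Fin (n₁ i))) →
      (((i : Fin k) → ZMod (n₁ i)) × ((j : Fin l) → ZMod (n₂ j))) := fun p =>
    (fun a => (((p.2 a : ℤ) - (p.1 a : ℤ)) : ZMod (n₁ a)),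
     fun b => (((φ p.2 b : ℤ) - (φ p.1 b : ℤ)) : ZMod (n₂ b))) with hf
  set s := Finset.univ.filter
    (fun p : ((i : Fin k) → Fin (n₁ i)) × ((i : Fin k) → Fin (n₁ i)) => ¬ p.1 = p.2) with hs
  set t := (Finset.univ.erase (0 : (i : Fin k) → ZMod (n₁ i))) ×ˢ
    (Finset.univ.erase (0 : (j : Fin l) → ZMod (n₂ j))) with ht
  set N := Fintype.card ((i : Fin k) → Fin (n₁ i)) with hNdef
  have hN : 2 ≤ N := by
    have hc : N = ∏ i, n₁ i := by simp [hNdef, Fintype.card_pi]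
    rw [hc]
    calc 2 ≤ n₁ ⟨0, hk⟩ := hn₁ _
      _ ≤ ∏ i, n₁ i := Finset.single_le_prod' (fun i _ => by have := hn₁ i; omega) (Finset.mem_univ _)
  have hcV₁ : Fintype.card ((i : Fin k) → ZMod (n₁ i)) = N := by
    simp [hNdef, Fintype.card_pi, ZMod.card]
  have hcV₂ : Fintype.card ((j : Fin l) → ZMod (n₂ j)) = N := by
    have h2 := Fintype.card_congr φ
    simp only [Fintype.card_pi, Fintype.card_fin, ZMod.card] at h2 ⊢
    simp [hNdef, Fintype.card_pi, ← h2]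
  have hscard : s.card = N * N - N := by
    have hseq : s = Finset.univ \ Finset.univ.diag := by
      ext p; simp [hs, Finset.mem_diag]
    rw [hseq, Finset.card_sdiff_of_subset (Finset.subset_univ _), Finset.diag_card]
    simp only [Finset.card_univ, Fintype.card_prod, ← hNdef]
  have htcard : t.card = (N - 1) * (N - 1) := by
    rw [ht, Finset.card_product, Finset.card_erase_of_mem (Finset.mem_univ _),
      Finset.card_erase_of_mem (Finset.mem_univ _), Finset.card_univ, Finset.card_univ, hcV₁, hcV₂]
  have hlt : t.card < s.card := by
    rw [hscard, htcard]
    have h1 : N ≤ N * N := Nat.le_mul_of_pos_left N (by omega)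
    have h2 : (1:ℕ) ≤ N := by omega
    zify [h1, h2]
    nlinarith [hN]
  have hmaps : ∀ p ∈ s, f p ∈ t := by
    intro p hp
    rw [hs, Finset.mem_filter] at hp
    rw [ht, Finset.mem_product]
    constructor
    · refine Finset.mem_erase.mpr ⟨?_, Finset.mem_univ _⟩
      intro h0
      apply hp.2
      ext a : 1
      have h0a : (((p.2 a : ℤ)) : ZMod (n₁ a)) - ((p.1 a : ℤ) : ZMod (n₁ a)) = 0 := by
        have := congrFun h0 a
        simpa [hf, Int.cast_sub] using this
      rw [sub_eq_zero] at h0a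
      exact (fin_eq_of_cast' _ _ _ h0a).symm
    · refine Finset.mem_erase.mpr ⟨?_, Finset.mem_univ _⟩
      intro h0
      apply hp.2
      apply φ.injective
      ext b : 1
      have h0b : (((φ p.2 b : ℤ)) : ZMod (n₂ b)) - ((φ p.1 b : ℤ) : ZMod (n₂ b)) = 0 := by
        have := congrFun h0 b
        simpa [hf, Int.cast_sub] using this
      rw [sub_eq_zero] at h0b
      exact (fin_eq_of_cast' _ _ _ h0b).symm
  obtain ⟨p, hps, q, hqs, hpq, hfeq⟩ := Finset.exists_ne_map_eq_of_card_lt_of_maps_to hlt hmaps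
  rw [hs, Finset.mem_filter] at hps hqs
  refine ⟨p.1, p.2, q.1, q.2, hps.2, hqs.2, by simpa [Prod.ext_iff] using hpq, ?_, ?_⟩
  · intro i
    have := congrFun (congrArg Prod.fst hfeq) i
    simpa [hf, Int.cast_sub] using this
  · intro j
    have := congrFun (congrArg Prod.snd hfeq) j
    simpa [hf, Int.cast_sub] using this

/-- If `A` is an `m`-dimensional permutation array of odd order `N`
with all side lengths `n_i` odd, then `A` has a repeated toroidal vector, and moreover
some window of size `n 1 × ⋯ × n m` of the periodic extension of `A` contains a repeated
difference vector.  In particular, multidimensional Costas arrays of odd order are not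
periodic Costas. -/
theorem odd_order_not_periodic_costas (k l : ℕ) (hk : 0 < k) (hl : 0 < l)
    (n₁ : Fin k → ℕ) (n₂ : Fin l → ℕ)
    (hn₁ : ∀ i, 2 ≤ n₁ i) (hn₂ : ∀ j, 2 ≤ n₂ j)
    (hodd₁ : ∀ i, Odd (n₁ i)) (hodd₂ : ∀ j, Odd (n₂ j))
    (φ : ((i : Fin k) → Fin (n₁ i)) ≃ ((j : Fin l) → Fin (n₂ j))) :
    (∃ x₁ y₁ x₂ y₂ : (i : Fin k) → Fin (n₁ i),
      x₁ ≠ y₁ ∧ x₂ ≠ y₂ ∧ (x₁, y₁) ≠ (x₂, y₂) ∧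
      (∀ i, (((y₁ i : ℤ) - (x₁ i : ℤ)) : ZMod (n₁ i))
          = (((y₂ i : ℤ) - (x₂ i : ℤ)) : ZMod (n₁ i))) ∧
      (∀ j, (((φ y₁ j : ℤ) - (φ x₁ j : ℤ)) : ZMod (n₂ j))
          = (((φ y₂ j : ℤ) - (φ x₂ j : ℤ)) : ZMod (n₂ j)))) ∧
    (∃ κ α₁ ω₁ α₂ ω₂ : ((i : Fin k) → ℤ) × ((j : Fin l) → ℤ),
      InWindowPerm k l n₁ n₂ κ α₁ ∧ InWindowPerm k l n₁ n₂ κ ω₁ ∧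
      InWindowPerm k l n₁ n₂ κ α₂ ∧ InWindowPerm k l n₁ n₂ κ ω₂ ∧
      IsExtDotPerm k l n₁ n₂ φ α₁ ∧ IsExtDotPerm k l n₁ n₂ φ ω₁ ∧
      IsExtDotPerm k l n₁ n₂ φ α₂ ∧ IsExtDotPerm k l n₁ n₂ φ ω₂ ∧
      α₁ ≠ ω₁ ∧ α₂ ≠ ω₂ ∧ (α₁, ω₁) ≠ (α₂, ω₂) ∧
      ω₁ - α₁ = ω₂ - α₂) := by
  obtain ⟨x₁, y₁, x₂, y₂, hxy1, hxy2, hne, hZ1, hZ2⟩ :=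
    oddCostas_part1 k l hk hl n₁ n₂ hn₁ hn₂ φ
  refine ⟨?done, ?_⟩
  case done => exact ⟨x₁, y₁, x₂, y₂, hxy1, hxy2, hne, hZ1, hZ2⟩
  -- balanced representatives of the common difference
  choose d₁ hd₁abs hd₁c using fun i =>
    exists_balanced_rep' (n₁ i) (hn₁ i) (hodd₁ i)
      ((((y₁ i : ℤ) - (x₁ i : ℤ)) : ZMod (n₁ i)))
  choose d₂ hd₂abs hd₂c using fun j =>
    exists_balanced_rep' (n₂ j) (hn₂ j) (hodd₂ j)
      ((((φ y₁ j : ℤ) - (φ x₁ j : ℤ)) : ZMod (n₂ j)))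
  -- windows coordinatewise
  choose κ₁ u₁ u₂ hu₁ hu₂ w₁ w₂ w₃ w₄ using fun i =>
    window_full' (n₁ i) (by have := hn₁ i; omega) (d₁ i) ((x₁ i : ℤ)) ((x₂ i : ℤ)) (hd₁abs i)
  choose κ₂ v₁ v₂ hv₁ hv₂ z₁ z₂ z₃ z₄ using fun j =>
    window_full' (n₂ j) (by have := hn₂ j; omega) (d₂ j) ((φ x₁ j : ℤ)) ((φ x₂ j : ℤ)) (hd₂abs j)
  -- cast versions of congruences
  have hu₁' : ∀ i, ((u₁ i : ZMod (n₁ i))) = ((x₁ i : ℤ) : ZMod (n₁ i)) :=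
    fun i => (ZMod.intCast_eq_intCast_iff _ _ _).mpr (hu₁ i)
  have hu₂' : ∀ i, ((u₂ i : ZMod (n₁ i))) = ((x₂ i : ℤ) : ZMod (n₁ i)) :=
    fun i => (ZMod.intCast_eq_intCast_iff _ _ _).mpr (hu₂ i)
  have hv₁' : ∀ j, ((v₁ j : ZMod (n₂ j))) = ((φ x₁ j : ℤ) : ZMod (n₂ j)) :=
    fun j => (ZMod.intCast_eq_intCast_iff _ _ _).mpr (hv₁ j)
  have hv₂' : ∀ j, ((v₂ j : ZMod (n₂ j))) = ((φ x₂ j : ℤ) : ZMod (n₂ j)) :=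
    fun j => (ZMod.intCast_eq_intCast_iff _ _ _).mpr (hv₂ j)
  have hd₁c₂ : ∀ i, ((d₁ i : ℤ) : ZMod (n₁ i)) = (((y₂ i : ℤ) - (x₂ i : ℤ)) : ZMod (n₁ i)) :=
    fun i => (hd₁c i).trans (hZ1 i)
  have hd₂c₂ : ∀ j, ((d₂ j : ℤ) : ZMod (n₂ j)) = (((φ y₂ j : ℤ) - (φ x₂ j : ℤ)) : ZMod (n₂ j)) :=
    fun j => (hd₂c j).trans (hZ2 j)
  refine ⟨(κ₁, κ₂), (u₁, v₁), (fun a => u₁ a + d₁ a, fun b => v₁ b + d₂ b),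
    (u₂, v₂), (fun a => u₂ a + d₁ a, fun b => v₂ b + d₂ b),
    ⟨fun a => w₁ a, fun b => z₁ b⟩, ⟨fun a => w₃ a, fun b => z₃ b⟩,
    ⟨fun a => w₂ a, fun b => z₂ b⟩, ⟨fun a => w₄ a, fun b => z₄ b⟩,
    ⟨x₁, ?_, ?_⟩, ⟨y₁, ?_, ?_⟩, ⟨x₂, ?_, ?_⟩, ⟨y₂, ?_, ?_⟩, ?_, ?_, ?_, ?_⟩
  · intro a; rw [hu₁' a]; push_cast; ring
  · intro b; rw [hv₁' b]; push_cast; ring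
  · intro a
    have := shift_cast' (n := n₁ a) (hu₁' a) (hd₁c a)
    rw [this]; push_cast; ring
  · intro b
    have := shift_cast' (n := n₂ b) (hv₁' b) (hd₂c b)
    rw [this]; push_cast; ring
  · intro a; rw [hu₂' a]; push_cast; ring
  · intro b; rw [hv₂' b]; push_cast; ring
  · intro a
    have := shift_cast' (n := n₁ a) (hu₂' a) (hd₁c₂ a)
    rw [this]; push_cast; ring
  · intro b
    have := shift_cast' (n := n₂ b) (hv₂' b) (hd₂c₂ b)
    rw [this]; push_cast; ring
  · -- α₁ ≠ ω₁
    obtain ⟨a, ha⟩ : ∃ a, x₁ a ≠ y₁ a := by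
      by_contra hcon; push_neg at hcon; exact hxy1 (funext hcon)
    have hda : d₁ a ≠ 0 := by
      intro h0
      apply ha
      apply fin_eq_of_cast'
      have := hd₁c a
      rw [h0] at this
      push_cast at this
      have h2 : ((x₁ a : ℤ) : ZMod (n₁ a)) = ((y₁ a : ℤ) : ZMod (n₁ a)) := by
        have h3 := sub_eq_zero.mp this.symm
        push_cast
        exact h3.symm
      exact h2
    intro h
    have := congrFun (congrArg Prod.fst h) a
    simp only at this
    omega
  · -- α₂ ≠ ω₂
    obtain ⟨a, ha⟩ : ∃ a, x₂ a ≠ y₂ a := by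
      by_contra hcon; push_neg at hcon; exact hxy2 (funext hcon)
    have hda : d₁ a ≠ 0 := by
      intro h0
      apply ha
      apply fin_eq_of_cast'
      have := hd₁c₂ a
      rw [h0] at this
      push_cast at this
      have h2 : ((x₂ a : ℤ) : ZMod (n₁ a)) = ((y₂ a : ℤ) : ZMod (n₁ a)) := by
        have h3 := sub_eq_zero.mp this.symm
        push_cast
        exact h3.symm
      exact h2
    intro h
    have := congrFun (congrArg Prod.fst h) a
    simp only at this
    omega
  · -- pairs distinct
    intro h
    rw [Prod.mk.injEq] at h
    obtain ⟨hα, hω⟩ := h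
    apply hne
    rw [Prod.mk.injEq]
    have hu12 : ∀ a, u₁ a = u₂ a := fun a => congrFun (congrArg Prod.fst hα) a
    have hx12 : x₁ = x₂ := by
      funext a
      apply fin_eq_of_cast'
      rw [← hu₁' a, ← hu₂' a, hu12 a]
    refine ⟨hx12, ?_⟩
    funext a
    apply fin_eq_of_cast'
    have e1 : ((y₁ a : ℤ) : ZMod (n₁ a)) = ((x₁ a : ℤ) : ZMod (n₁ a)) + ((d₁ a : ℤ) : ZMod (n₁ a)) := by
      rw [hd₁c a]; push_cast; ring
    have e2 : ((y₂ a : ℤ) : ZMod (n₁ a)) = ((x₂ a : ℤ) : ZMod (n₁ a)) + ((d₁ a : ℤ) : ZMod (n₁ a)) := by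
      rw [hd₁c₂ a]; push_cast; ring
    rw [e1, e2, hx12]
  · -- equal differences
    rw [Prod.ext_iff]
    constructor <;> funext a <;> simp [Prod.fst, Prod.snd]
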